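/- Let G be a group and n ≥ 1. Two elements of the wreath product Gₙ = G ≀ Sₙ are conjugate in Gₙ if and only if they have the same type, i.e. if and only if for every r ≥ 1 and every conjugacy class [c] of elements of G, the number m_r(c) of r-cycles of the underlying permutation whose cycle product lies in [c] is the same for both elements. -/

import Mathlib

open scoped BigOperators

/-- The action of permutations of `Fin n` on `Fin n → G` by `(s • g) i = g (s⁻¹ i)`,
as a homomorphism to the automorphism group. -/
def permAut (G : Type*) [Group G] (n : ℕ) : Equiv.Perm (Fin n) →* MulAut (Fin n → G) where
  toFun s :=
    { toFun := fun g => g ∘ s.symm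
      invFun := fun g => g ∘ s
      left_inv := fun g => by funext i; simp
      right_inv := fun g => by funext i; simp
      map_mul' := fun g h => rfl }
  map_one' := by ext g i; simp; rfl
  map_mul' s t := by ext g i; simp [Equiv.Perm.mul_def]

/-- The wreath product `G ≀ Sₙ`, the semidirect product of `Gⁿ` by the symmetric
group `Sₙ` permuting the factors. -/
abbrev WreathProduct (G : Type*) [Group G] (n : ℕ) :=
  (Fin n → G) ⋊[permAut G n] Equiv.Perm (Fin n)

/-- The action of the wreath product `G ≀ Sₙ` on `Xⁿ`:
`((g₁,…,gₙ),s)·(x₁,…,xₙ) = (g₁ x_{s⁻¹(1)},…,gₙ x_{s⁻¹(n)})`. -/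
instance wreathMulAction (G : Type*) [Group G] (X : Type*) [MulAction G X] (n : ℕ) :
    MulAction (WreathProduct G n) (Fin n → X) where
  smul a x := fun i => a.left i • x (a.right.symm i)
  one_smul x := by
    funext i
    show (1 : WreathProduct G n).left i • x ((1 : WreathProduct G n).right.symm i) = x i
    simp; rfl
  mul_smul a b x := by
    funext i
    show (a * b).left i • x ((a * b).right.symm i)
      = a.left i • (fun j => b.left j • x (b.right.symm j)) (a.right.symm i)
    simp [SemidirectProduct.mul_left, SemidirectProduct.mul_right, permAut, mul_smul,
      Equiv.Perm.mul_def]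

theorem wreath_smul_apply (G : Type*) [Group G] (X : Type*) [MulAction G X] (n : ℕ)
    (a : WreathProduct G n) (x : Fin n → X) (i : Fin n) :
    (a • x) i = a.left i • x (a.right.symm i) := rfl

open scoped Classical in
/-- The orbifold Euler characteristic of order `k` of a `G`-space `X`:
`χ⁽ᵏ⁾(X,G) = (1/|G|) Σ_{pairwise commuting (g₀,…,g_k)} |X^⟨g₀,…,g_k⟩|`. -/
noncomputable def orbChi (k : ℕ) (G : Type*) [Group G] (X : Type*) [MulAction G X] : ℚ :=
  (∑ᶠ g : Fin (k + 1) → G,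
      if ∀ i j, Commute (g i) (g j) then
        (Nat.card {x : X // ∀ i, g i • x = x} : ℚ)
      else 0) / (Nat.card G : ℚ)

/-- Generalized binomial coefficient `α choose j` for rational `α`. -/
noncomputable def qchoose (α : ℚ) (j : ℕ) : ℚ :=
  (∏ i ∈ Finset.range j, (α - i)) / (j.factorial : ℚ)

/-- The binomial series `(1 - t^m)^α ∈ ℚ⟦t⟧` for a rational exponent `α`:
its coefficient at `t^(m·j)` is `(-1)^j (α choose j)`. -/
noncomputable def onePowRat (m : ℕ) (α : ℚ) : PowerSeries ℚ :=
  PowerSeries.mk fun n => if m ∣ n then (-1 : ℚ) ^ (n / m) * qchoose α (n / m) else 0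

/-- The cycle product of the element `(g,s) ∈ G ≀ Sₙ` corresponding to the cycle
`(i, s(i), …, s^{r-1}(i))` of `s` through `i` (of length `r`, the minimal period of `i`),
computed with starting point `i`: `g_{s^{r-1}(i)} ⋯ g_{s(i)} g_i`. -/
noncomputable def cycleProd {G : Type*} [Group G] {n : ℕ} (g : Fin n → G) (s : Equiv.Perm (Fin n))
    (i : Fin n) : G :=
  (((List.range (Function.minimalPeriod (⇑s) i)).map fun j => g ((s ^ j) i)).reverse).prod

/-- `m_r(c)`, the number of `r`-cycles of `s` (fixed points counted as `1`-cycles) whose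
cycle product lies in the conjugacy class of `c`: each such cycle consists of exactly `r`
points `i` with minimal period `r` and cycle product (computed from the starting point `i`)
conjugate to `c`. -/
noncomputable def mCount {G : Type*} [Group G] {n : ℕ} (g : Fin n → G)
    (s : Equiv.Perm (Fin n)) (r : ℕ) (c : G) : ℕ :=
  Nat.card {i : Fin n // Function.minimalPeriod (⇑s) i = r ∧ IsConj (cycleProd g s i) c} / r


namespace WreathConjAux

open Equiv Function

variable {G : Type*} [Group G] {n : ℕ}

lemma telescope (k f : ℕ → G) :
    ∀ r : ℕ, (((List.range r).map fun j => k (j + 1) * f j * (k j)⁻¹).reverse).prod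
      = k r * (((List.range r).map f).reverse).prod * (k 0)⁻¹
  | 0 => by simp
  | (r + 1) => by
    rw [List.range_succ]
    simp only [List.map_append, List.reverse_append, List.prod_append, List.map_cons,
      List.map_nil, List.reverse_cons, List.reverse_nil, List.nil_append, List.prod_cons,
      List.prod_nil, telescope k f r]
    group

lemma rot (f : ℕ → G) (r : ℕ) (hf : f r = f 0) :
    (((List.range r).map fun j => f (j + 1)).reverse).prod
      = f 0 * (((List.range r).map f).reverse).prod * (f 0)⁻¹ := by
  have h1 : (((List.range (r + 1)).map f).reverse).prod
      = (((List.range r).map fun j => f (j + 1)).reverse).prod * f 0 := by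
    rw [List.range_succ_eq_map]
    simp [Function.comp_def]
  have h2 : (((List.range (r + 1)).map f).reverse).prod
      = f r * (((List.range r).map f).reverse).prod := by
    rw [List.range_succ]; simp
  rw [hf] at h2
  have h3 := h1.symm.trans h2
  rw [eq_mul_inv_iff_mul_eq, h3]

lemma perm_minPeriod_pos (s : Perm (Fin n)) (i : Fin n) : 0 < minimalPeriod ⇑s i := by
  have h : IsPeriodicPt ⇑s (orderOf s) i := by
    show (⇑s)^[orderOf s] i = i
    rw [← Equiv.Perm.coe_pow, pow_orderOf_eq_one]
    rfl
  exact h.minimalPeriod_pos (orderOf_pos s)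

lemma pow_minPeriod (s : Perm (Fin n)) (i : Fin n) :
    (s ^ minimalPeriod ⇑s i) i = i :=
  isPeriodicPt_minimalPeriod ⇑s i

lemma conj_pow_apply (s t : Perm (Fin n)) (m : ℕ) (i : Fin n) :
    ((t * s * t⁻¹) ^ m) (t i) = t ((s ^ m) i) := by
  rw [conj_pow]
  simp [Equiv.Perm.mul_apply]

lemma minPeriod_conj (s t : Perm (Fin n)) (i : Fin n) :
    minimalPeriod ⇑(t * s * t⁻¹) (t i) = minimalPeriod ⇑s i := by
  have key : ∀ (s t : Perm (Fin n)) (i : Fin n),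
      minimalPeriod ⇑(t * s * t⁻¹) (t i) ≤ minimalPeriod ⇑s i := by
    intro s t i
    have hp : IsPeriodicPt ⇑(t * s * t⁻¹) (minimalPeriod ⇑s i) (t i) := by
      show ((t * s * t⁻¹) ^ minimalPeriod ⇑s i) (t i) = t i
      rw [conj_pow_apply, pow_minPeriod]
    exact hp.minimalPeriod_le (perm_minPeriod_pos s i)
  refine le_antisymm (key s t i) ?_
  have h2 := key (t * s * t⁻¹) t⁻¹ (t i)
  have e1 : t⁻¹ * (t * s * t⁻¹) * t⁻¹⁻¹ = s := by group
  rw [e1, show t⁻¹ (t i) = i from Equiv.symm_apply_apply t i] at h2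
  exact h2

lemma minPeriod_apply' (s : Perm (Fin n)) (i : Fin n) :
    minimalPeriod ⇑s (s i) = minimalPeriod ⇑s i := by
  have := minPeriod_conj s s i
  have e1 : s * s * s⁻¹ = s := by group
  rwa [e1] at this

lemma minPeriod_pow (s : Perm (Fin n)) (m : ℕ) :
    ∀ i : Fin n, minimalPeriod ⇑s ((s ^ m) i) = minimalPeriod ⇑s i := by
  induction m with
  | zero => intro i; simp
  | succ m ih =>
    intro i
    rw [pow_succ, Equiv.Perm.mul_apply, ih (s i), minPeriod_apply']

lemma cycleProd_conj (g h : Fin n → G) (s t : Equiv.Perm (Fin n)) (i : Fin n) :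
    cycleProd (fun j => h j * g (t⁻¹ j) * (h (t (s⁻¹ (t⁻¹ j))))⁻¹) (t * s * t⁻¹) (t i)
      = h (t (s⁻¹ i)) * cycleProd g s i * (h (t (s⁻¹ i)))⁻¹ := by
  set r := minimalPeriod ⇑s i with hrdef
  have hper : minimalPeriod ⇑(t * s * t⁻¹) (t i) = r := minPeriod_conj s t i
  rw [cycleProd, cycleProd, hper, ← hrdef]
  have hcomm : ∀ m : ℕ, ∀ x : Fin n, (s ^ m) (s⁻¹ x) = s⁻¹ ((s ^ m) x) := by
    intro m x
    have hc : s ^ m * s⁻¹ = s⁻¹ * s ^ m := ((Commute.refl s).inv_right.pow_left m).eq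
    calc (s ^ m) (s⁻¹ x) = (s ^ m * s⁻¹) x := rfl
      _ = (s⁻¹ * s ^ m) x := by rw [hc]
      _ = s⁻¹ ((s ^ m) x) := rfl
  have hfun : (fun j => (fun m => h m * g (t⁻¹ m) * (h (t (s⁻¹ (t⁻¹ m))))⁻¹)
        (((t * s * t⁻¹) ^ j) (t i)))
      = fun j => h (t ((s ^ (j + 1)) (s⁻¹ i))) * g ((s ^ j) i)
          * (h (t ((s ^ j) (s⁻¹ i))))⁻¹ := by
    funext j
    have hX : ((t * s * t⁻¹) ^ j) (t i) = t ((s ^ j) i) := conj_pow_apply s t j i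
    have h1 : (s ^ (j + 1)) (s⁻¹ i) = (s ^ j) i := by
      rw [pow_succ, Equiv.Perm.mul_apply, show s (s⁻¹ i) = i from Equiv.apply_symm_apply s i]
    simp only [hX, show ∀ x, t⁻¹ (t x) = x from Equiv.symm_apply_apply t, h1, hcomm j i]
  have tele := telescope (fun m => h (t ((s ^ m) (s⁻¹ i)))) (fun m => g ((s ^ m) i)) r
  rw [hfun, tele]
  have h3 : (s ^ r) (s⁻¹ i) = s⁻¹ i := by
    rw [hcomm r i, hrdef, pow_minPeriod]
  rw [h3, pow_zero]
  rfl

lemma cycleProd_apply (g : Fin n → G) (s : Equiv.Perm (Fin n)) (i : Fin n) :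
    cycleProd g s (s i) = g i * cycleProd g s i * (g i)⁻¹ := by
  set r := minimalPeriod ⇑s i with hrdef
  have hper : minimalPeriod ⇑s (s i) = r := minPeriod_apply' s i
  rw [cycleProd, cycleProd, hper, ← hrdef]
  have hfun : (fun j => g ((s ^ j) (s i))) = fun j => g ((s ^ (j + 1)) i) := by
    funext j
    show g ((s ^ j) (s i)) = g ((s ^ (j + 1)) i)
    rw [pow_succ, Equiv.Perm.mul_apply]
  have hrot := rot (fun m => g ((s ^ m) i)) r
    (by show g ((s ^ r) i) = g ((s ^ 0) i); rw [hrdef, pow_minPeriod, pow_zero]; rfl)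
  rw [hfun, hrot, pow_zero]
  rfl

lemma isConj_cycleProd_pow (g : Fin n → G) (s : Equiv.Perm (Fin n)) (m : ℕ) :
    ∀ i : Fin n, IsConj (cycleProd g s ((s ^ m) i)) (cycleProd g s i) := by
  induction m with
  | zero =>
    intro i
    rw [pow_zero]
    exact IsConj.refl _
  | succ m ih =>
    intro i
    rw [pow_succ, Equiv.Perm.mul_apply]
    exact (ih (s i)).trans (isConj_iff.mpr ⟨g i, (cycleProd_apply g s i).symm⟩).symm

lemma conj_mk (h g : Fin n → G) (t s : Equiv.Perm (Fin n)) :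
    (⟨h, t⟩ : WreathProduct G n) * ⟨g, s⟩ * (⟨h, t⟩ : WreathProduct G n)⁻¹
      = ⟨fun j => h j * g (t⁻¹ j) * (h (t (s⁻¹ (t⁻¹ j))))⁻¹, t * s * t⁻¹⟩ := by
  ext
  · rw [SemidirectProduct.mul_left, SemidirectProduct.mul_left, SemidirectProduct.inv_left,
      SemidirectProduct.mul_right]
    simp [SemidirectProduct.mul_left, SemidirectProduct.mul_right,
      SemidirectProduct.inv_left, SemidirectProduct.inv_right, permAut,
      Equiv.Perm.mul_def, Equiv.Perm.inv_def, Equiv.symm_symm, mul_assoc]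
  · rw [SemidirectProduct.mul_right, SemidirectProduct.mul_right, SemidirectProduct.inv_right]

open scoped Classical in
noncomputable def bp (s : Equiv.Perm (Fin n)) (i : Fin n) : Fin n :=
  (Finset.univ.filter fun j => s.SameCycle i j).min'
    ⟨i, Finset.mem_filter.mpr ⟨Finset.mem_univ i, Equiv.Perm.SameCycle.refl s i⟩⟩

open scoped Classical in
lemma sameCycle_bp (s : Equiv.Perm (Fin n)) (i : Fin n) : s.SameCycle i (bp s i) := by
  have := Finset.min'_mem (Finset.univ.filter fun j => s.SameCycle i j)
    ⟨i, Finset.mem_filter.mpr ⟨Finset.mem_univ i, Equiv.Perm.SameCycle.refl s i⟩⟩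
  rw [Finset.mem_filter] at this
  exact this.2

open scoped Classical in
lemma bp_eq (s : Equiv.Perm (Fin n)) {i j : Fin n} (hij : s.SameCycle i j) :
    bp s i = bp s j := by
  have hset : (Finset.univ.filter fun x => s.SameCycle i x)
      = (Finset.univ.filter fun x => s.SameCycle j x) := by
    ext x
    simp only [Finset.mem_filter, Finset.mem_univ, true_and]
    exact ⟨fun hh => hij.symm.trans hh, fun hh => hij.trans hh⟩
  unfold bp
  apply le_antisymm
  · apply Finset.min'_le
    rw [hset]
    exact Finset.min'_mem _ _
  · apply Finset.min'_le
    rw [← hset]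
    exact Finset.min'_mem _ _

lemma sameCycle_pow (s : Equiv.Perm (Fin n)) (i : Fin n) (m : ℕ) :
    s.SameCycle i ((s ^ m) i) :=
  ⟨(m : ℤ), by rw [zpow_natCast]⟩

lemma bp_bp (s : Equiv.Perm (Fin n)) (i : Fin n) : bp s (bp s i) = bp s i :=
  (bp_eq s (sameCycle_bp s i)).symm

lemma bp_pow (s : Equiv.Perm (Fin n)) (i : Fin n) (m : ℕ) :
    bp s ((s ^ m) i) = bp s i :=
  (bp_eq s (sameCycle_pow s i m)).symm

lemma exists_pow_bp (s : Equiv.Perm (Fin n)) (i : Fin n) :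
    ∃ k : ℕ, (s ^ k) (bp s i) = i := by
  obtain ⟨k, -, hk⟩ := (sameCycle_bp s i).symm.exists_pow_eq'
  exact ⟨k, hk⟩

noncomputable def idx (s : Equiv.Perm (Fin n)) (i : Fin n) : ℕ :=
  Nat.find (exists_pow_bp s i)

lemma idx_spec (s : Equiv.Perm (Fin n)) (i : Fin n) : (s ^ idx s i) (bp s i) = i :=
  Nat.find_spec (exists_pow_bp s i)

lemma idx_lt (s : Equiv.Perm (Fin n)) (i : Fin n) :
    idx s i < minimalPeriod ⇑s (bp s i) := by
  by_contra hlt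
  push_neg at hlt
  set r := minimalPeriod ⇑s (bp s i) with hr
  have hrpos : 0 < r := perm_minPeriod_pos s _
  have hper : IsPeriodicPt ⇑s r (bp s i) := isPeriodicPt_minimalPeriod ⇑s _
  have hmod : (s ^ (idx s i % r)) (bp s i) = i := by
    have h2 := hper.iterate_mod_apply (idx s i)
    rw [← Equiv.Perm.coe_pow, ← Equiv.Perm.coe_pow] at h2
    rw [show ((s ^ (idx s i % r)) (bp s i) = ((⇑(s ^ (idx s i % r))) (bp s i))) from rfl, h2]
    exact idx_spec s i
  exact Nat.find_min (exists_pow_bp s i)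
    (lt_of_lt_of_le (Nat.mod_lt _ hrpos) hlt) hmod

lemma idx_pow (s : Equiv.Perm (Fin n)) (x : Fin n) (hx : bp s x = x) {m : ℕ}
    (hm : m < minimalPeriod ⇑s x) : idx s ((s ^ m) x) = m := by
  have hbp : bp s ((s ^ m) x) = x := (bp_pow s x m).trans hx
  rw [idx, Nat.find_eq_iff]
  constructor
  · rw [hbp]
  · intro k hk hkeq
    rw [hbp] at hkeq
    have := Function.iterate_injOn_Iio_minimalPeriod (f := ⇑s) (x := x)
      (Set.mem_Iio.mpr (hk.trans hm)) (Set.mem_Iio.mpr hm) hkeq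
    omega

lemma minPeriod_bp (s : Equiv.Perm (Fin n)) (i : Fin n) :
    minimalPeriod ⇑s (bp s i) = minimalPeriod ⇑s i := by
  conv_rhs => rw [← idx_spec s i]
  rw [minPeriod_pow]

lemma isConj_bp (g : Fin n → G) (s : Equiv.Perm (Fin n)) (i : Fin n) :
    IsConj (cycleProd g s i) (cycleProd g s (bp s i)) := by
  have := isConj_cycleProd_pow g s (idx s i) (bp s i)
  rwa [idx_spec s i] at this

lemma card_fiber (g : Fin n → G) (s : Equiv.Perm (Fin n)) (r : ℕ) (c : G) :
    Nat.card {i : Fin n // minimalPeriod ⇑s i = r ∧ IsConj (cycleProd g s i) c}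
      = r * Nat.card {x : Fin n // bp s x = x ∧ minimalPeriod ⇑s x = r
          ∧ IsConj (cycleProd g s x) c} := by
  rcases Nat.eq_zero_or_pos r with rfl | hr
  · have : IsEmpty {i : Fin n // minimalPeriod ⇑s i = 0 ∧ IsConj (cycleProd g s i) c} :=
      ⟨fun ⟨i, hi, _⟩ => (perm_minPeriod_pos s i).ne' hi⟩
    rw [Nat.card_of_isEmpty, zero_mul]
  · have e : {i : Fin n // minimalPeriod ⇑s i = r ∧ IsConj (cycleProd g s i) c}
        ≃ {x : Fin n // bp s x = x ∧ minimalPeriod ⇑s x = r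
            ∧ IsConj (cycleProd g s x) c} × Fin r :=
      { toFun := fun i =>
          (⟨bp s i.1, bp_bp s i.1, (minPeriod_bp s i.1).trans i.2.1,
            (isConj_bp g s i.1).symm.trans i.2.2⟩,
           ⟨idx s i.1, by
              have := idx_lt s i.1
              rwa [minPeriod_bp s i.1, i.2.1] at this⟩)
        invFun := fun p =>
          ⟨(s ^ (p.2 : ℕ)) p.1.1,
            (minPeriod_pow s (p.2 : ℕ) p.1.1).trans p.1.2.2.1,
            (isConj_cycleProd_pow g s (p.2 : ℕ) p.1.1).trans p.1.2.2.2⟩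
        left_inv := fun i => Subtype.ext (idx_spec s i.1)
        right_inv := fun p => by
          obtain ⟨⟨x, hx1, hx2, hx3⟩, m⟩ := p
          have hbase : bp s ((s ^ (m : ℕ)) x) = x := (bp_pow s x (m : ℕ)).trans hx1
          have hidx : idx s ((s ^ (m : ℕ)) x) = (m : ℕ) :=
            idx_pow s x hx1 (by rw [hx2]; exact m.isLt)
          refine Prod.ext ?_ ?_
          · exact Subtype.ext hbase
          · exact Fin.ext hidx }
    rw [Nat.card_congr e, Nat.card_prod,
      show Nat.card (Fin r) = r by rw [Nat.card_eq_fintype_card, Fintype.card_fin],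
      mul_comm]

lemma classSet_eq_iff {u c : G} :
    {d | IsConj u d} = {d | IsConj c d} ↔ IsConj u c := by
  constructor
  · intro h
    have : c ∈ {d | IsConj c d} := IsConj.refl c
    rw [← h] at this
    exact this
  · intro h
    ext d
    exact ⟨fun hd => h.symm.trans hd, fun hd => h.trans hd⟩

lemma card_fiber' (g : Fin n → G) (s : Equiv.Perm (Fin n)) (r : ℕ) (c : G) :
    Nat.card {x : {x : Fin n // bp s x = x} //
        (minimalPeriod ⇑s x.1, {d | IsConj (cycleProd g s x.1) d}) = (r, {d | IsConj c d})}
      = Nat.card {x : Fin n // bp s x = x ∧ minimalPeriod ⇑s x = r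
          ∧ IsConj (cycleProd g s x) c} := by
  apply Nat.card_congr
  refine (Equiv.subtypeSubtypeEquivSubtypeInter (fun x => bp s x = x)
    (fun x => (minimalPeriod ⇑s x, {d | IsConj (cycleProd g s x) d})
      = (r, {d | IsConj c d}))).trans (Equiv.subtypeEquivRight ?_)
  intro x
  rw [Prod.mk.injEq, classSet_eq_iff, and_congr_right_iff]
  intro _
  rfl

lemma matching {α β : Type*} {I : Type*} [Finite α] [Finite β] (u : α → I) (v : β → I)
    (h : ∀ x : I, Nat.card {a // u a = x} = Nat.card {b // v b = x}) :
    ∃ e : α ≃ β, ∀ a, v (e a) = u a := by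
  have hne : ∀ x : I, Nonempty ({a // u a = x} ≃ {b // v b = x}) :=
    fun x => Finite.card_eq.mp (h x)
  let F := fun x => (hne x).some
  refine ⟨(Equiv.sigmaFiberEquiv u).symm.trans
    ((Equiv.sigmaCongrRight F).trans (Equiv.sigmaFiberEquiv v)), fun a => ?_⟩
  exact (F (u a) ⟨a, rfl⟩).2

lemma exists_gauge (g1 g2 : Fin n → G) (s : Equiv.Perm (Fin n))
    (hcj : ∀ i : Fin n, IsConj (cycleProd g1 s i) (cycleProd g2 s i)) :
    ∃ h : Fin n → G, ∀ j : Fin n, g2 j = h j * g1 j * (h (s⁻¹ j))⁻¹ := by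
  have hex : ∀ x : Fin n, ∃ u : G, u * cycleProd g1 s x * u⁻¹ = cycleProd g2 s x :=
    fun x => isConj_iff.mp (hcj x)
  choose u hu using hex
  set Q : (Fin n → G) → Fin n → G := fun g i =>
    (((List.range (idx s i + 1)).map fun j => g ((s ^ j) (bp s i))).reverse).prod with hQ
  refine ⟨fun i => Q g2 i * u (bp s i) * (Q g1 i)⁻¹, ?_⟩
  intro j
  simp only []
  have hxx : bp s (bp s j) = bp s j := bp_bp s j
  have hspec : (s ^ idx s j) (bp s j) = j := idx_spec s j
  have hklt : idx s j < minimalPeriod ⇑s j := by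
    have := idx_lt s j
    rwa [minPeriod_bp s j] at this
  have hrpos : 0 < minimalPeriod ⇑s j := perm_minPeriod_pos s j
  rcases Nat.eq_zero_or_pos (idx s j) with hk0 | hkpos
  · -- j is a base point
    have hjx : bp s j = j := by
      conv_rhs => rw [← hspec]
      rw [hk0, pow_zero]
      rfl
    have hsinv : s⁻¹ j = (s ^ (minimalPeriod ⇑s j - 1)) j := by
      rw [Equiv.Perm.inv_eq_iff_eq]
      have h1 : s ((s ^ (minimalPeriod ⇑s j - 1)) j) = j := by
        rw [show s ((s ^ (minimalPeriod ⇑s j - 1)) j)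
            = (s ^ (minimalPeriod ⇑s j - 1 + 1)) j from by rw [pow_succ']; rfl,
          show minimalPeriod ⇑s j - 1 + 1 = minimalPeriod ⇑s j from by omega]
        exact pow_minPeriod s j
      exact h1.symm
    have hbpinv : bp s (s⁻¹ j) = j := by rw [hsinv, bp_pow, hjx]
    have hidxinv : idx s (s⁻¹ j) = minimalPeriod ⇑s j - 1 := by
      rw [hsinv]
      exact idx_pow s j hjx (by omega)
    have hQj : ∀ g : Fin n → G, Q g j = g j := by
      intro g
      rw [hQ]
      simp only [hk0, hjx]
      rw [List.range_succ]
      simp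
    have hQinv : ∀ g : Fin n → G, Q g (s⁻¹ j) = cycleProd g s j := by
      intro g
      rw [hQ, cycleProd]
      simp only [hbpinv, hidxinv]
      rw [show minimalPeriod ⇑s j - 1 + 1 = minimalPeriod ⇑s j from by omega]
    rw [hQj g1, hQj g2, hQinv g1, hQinv g2, hbpinv, hjx, ← hu j]
    group
  · -- j is not a base point
    obtain ⟨m, hm⟩ : ∃ m, idx s j = m + 1 := ⟨idx s j - 1, by omega⟩
    have hsinv : s⁻¹ j = (s ^ m) (bp s j) := by
      rw [Equiv.Perm.inv_eq_iff_eq]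
      have h1 : s ((s ^ m) (bp s j)) = j := by
        rw [show s ((s ^ m) (bp s j)) = (s ^ (m + 1)) (bp s j) from by rw [pow_succ']; rfl,
          ← hm]
        exact hspec
      exact h1.symm
    have hbpinv : bp s (s⁻¹ j) = bp s j := by rw [hsinv, bp_pow, hxx]
    have hidxinv : idx s (s⁻¹ j) = m := by
      rw [hsinv]
      refine idx_pow s (bp s j) hxx ?_
      rw [minPeriod_bp s j]
      omega
    have hQstep : ∀ g : Fin n → G, Q g j = g j * Q g (s⁻¹ j) := by
      intro g
      rw [hQ]
      simp only [hbpinv, hidxinv]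
      rw [hm, List.range_succ]
      simp only [List.map_append, List.reverse_append, List.prod_append, List.map_cons,
        List.map_nil, List.reverse_cons, List.reverse_nil, List.nil_append, List.prod_cons,
        List.prod_nil, mul_one]
      rw [show (s ^ (m + 1)) (bp s j) = j from by rw [← hm]; exact hspec]
    rw [hQstep g1, hQstep g2, hbpinv]
    group

lemma mCount_conj (g h : Fin n → G) (s t : Equiv.Perm (Fin n)) (r : ℕ) (c : G) :
    mCount (fun j => h j * g (t⁻¹ j) * (h (t (s⁻¹ (t⁻¹ j))))⁻¹) (t * s * t⁻¹) r c
      = mCount g s r c := by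
  unfold mCount
  congr 1
  apply Nat.card_congr
  refine (Equiv.subtypeEquiv t fun i => ?_).symm
  have hb : IsConj (cycleProd g s i)
      (h (t (s⁻¹ i)) * cycleProd g s i * (h (t (s⁻¹ i)))⁻¹) :=
    isConj_iff.mpr ⟨h (t (s⁻¹ i)), rfl⟩
  rw [minPeriod_conj s t i, cycleProd_conj g h s t i]
  exact and_congr Iff.rfl ⟨fun hh => hb.symm.trans hh, fun hh => hb.trans hh⟩

lemma backward (g1 g2 : Fin n → G) (s1 s2 : Equiv.Perm (Fin n))
    (e : {x : Fin n // bp s1 x = x} ≃ {x : Fin n // bp s2 x = x})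
    (hper : ∀ x, minimalPeriod ⇑s2 (e x).1 = minimalPeriod ⇑s1 x.1)
    (hcls : ∀ x, IsConj (cycleProd g2 s2 (e x).1) (cycleProd g1 s1 x.1)) :
    IsConj (⟨g1, s1⟩ : WreathProduct G n) ⟨g2, s2⟩ := by
  classical
  have hper' : ∀ y, minimalPeriod ⇑s1 (e.symm y).1 = minimalPeriod ⇑s2 y.1 := by
    intro y
    have h0 := hper (e.symm y)
    rw [Equiv.apply_symm_apply] at h0
    exact h0.symm
  set T : Fin n → Fin n := fun i => (s2 ^ idx s1 i) ((e ⟨bp s1 i, bp_bp s1 i⟩).1) with hT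
  set U : Fin n → Fin n := fun j => (s1 ^ idx s2 j) ((e.symm ⟨bp s2 j, bp_bp s2 j⟩).1) with hU
  have hTbp : ∀ i : Fin n, bp s2 (T i) = (e ⟨bp s1 i, bp_bp s1 i⟩).1 := by
    intro i
    rw [hT]
    simp only []
    rw [bp_pow]
    exact (e ⟨bp s1 i, bp_bp s1 i⟩).2
  have hTidx : ∀ i : Fin n, idx s2 (T i) = idx s1 i := by
    intro i
    rw [hT]
    simp only []
    refine idx_pow s2 _ (e ⟨bp s1 i, bp_bp s1 i⟩).2 ?_
    rw [hper ⟨bp s1 i, bp_bp s1 i⟩]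
    exact idx_lt s1 i
  have hUbp : ∀ j : Fin n, bp s1 (U j) = (e.symm ⟨bp s2 j, bp_bp s2 j⟩).1 := by
    intro j
    rw [hU]
    simp only []
    rw [bp_pow]
    exact (e.symm ⟨bp s2 j, bp_bp s2 j⟩).2
  have hUidx : ∀ j : Fin n, idx s1 (U j) = idx s2 j := by
    intro j
    rw [hU]
    simp only []
    refine idx_pow s1 _ (e.symm ⟨bp s2 j, bp_bp s2 j⟩).2 ?_
    rw [hper' ⟨bp s2 j, bp_bp s2 j⟩]
    exact idx_lt s2 j
  have hUT : ∀ i, U (T i) = i := by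
    intro i
    rw [hU]
    simp only []
    have h1 : (⟨bp s2 (T i), bp_bp s2 (T i)⟩ : {x // bp s2 x = x})
        = e ⟨bp s1 i, bp_bp s1 i⟩ := Subtype.ext (hTbp i)
    rw [hTidx i, h1, Equiv.symm_apply_apply]
    exact idx_spec s1 i
  have hTU : ∀ j, T (U j) = j := by
    intro j
    rw [hT]
    simp only []
    have h1 : (⟨bp s1 (U j), bp_bp s1 (U j)⟩ : {x // bp s1 x = x})
        = e.symm ⟨bp s2 j, bp_bp s2 j⟩ := Subtype.ext (hUbp j)
    rw [hUidx j, h1, Equiv.apply_symm_apply]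
    exact idx_spec s2 j
  have hconj : ∀ i, T (s1 i) = s2 (T i) := by
    intro i
    have hbp1 : bp s1 (s1 i) = bp s1 i := by
      have hsc : s1.SameCycle i (s1 i) := ⟨1, by simp⟩
      exact (bp_eq s1 hsc).symm
    have hklt : idx s1 i < minimalPeriod ⇑s1 (bp s1 i) := idx_lt s1 i
    rcases eq_or_lt_of_le (Nat.succ_le_of_lt hklt) with heq | hlt
    · -- wrap around: s1 i = bp s1 i
      have hwrap : (s1 ^ (idx s1 i + 1)) (bp s1 i) = bp s1 i := by
        rw [show idx s1 i + 1 = minimalPeriod ⇑s1 (bp s1 i) from heq]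
        exact pow_minPeriod s1 (bp s1 i)
      have hs1i : s1 i = bp s1 i := by
        conv_lhs => rw [← idx_spec s1 i]
        rw [show s1 ((s1 ^ idx s1 i) (bp s1 i)) = (s1 ^ (idx s1 i + 1)) (bp s1 i) from by
          rw [pow_succ']; rfl, hwrap]
      have hidx0 : idx s1 (bp s1 i) = 0 := by
        have h0 := idx_pow s1 (bp s1 i) (bp_bp s1 i) (m := 0) (perm_minPeriod_pos s1 _)
        simpa using h0
      have h2 : T (s1 i) = (e ⟨bp s1 i, bp_bp s1 i⟩).1 := by
        rw [hs1i, hT]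
        simp only []
        have h3 : (⟨bp s1 (bp s1 i), bp_bp s1 (bp s1 i)⟩ : {x // bp s1 x = x})
            = ⟨bp s1 i, bp_bp s1 i⟩ := Subtype.ext (bp_bp s1 i)
        rw [hidx0, h3, pow_zero]
        rfl
      have h4 : s2 (T i) = (e ⟨bp s1 i, bp_bp s1 i⟩).1 := by
        rw [hT]
        simp only []
        rw [show s2 ((s2 ^ idx s1 i) ((e ⟨bp s1 i, bp_bp s1 i⟩).1))
            = (s2 ^ (idx s1 i + 1)) ((e ⟨bp s1 i, bp_bp s1 i⟩).1) from by rw [pow_succ']; rfl]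
        rw [show idx s1 i + 1 = minimalPeriod ⇑s1 (bp s1 i) from heq,
          ← hper ⟨bp s1 i, bp_bp s1 i⟩]
        exact pow_minPeriod s2 _
      rw [h2, h4]
    · -- no wrap
      have hidxS : idx s1 (s1 i) = idx s1 i + 1 := by
        have hs1i : s1 i = (s1 ^ (idx s1 i + 1)) (bp s1 i) := by
          conv_lhs => rw [← idx_spec s1 i]
          rw [pow_succ']
          rfl
        rw [hs1i]
        exact idx_pow s1 (bp s1 i) (bp_bp s1 i) hlt
      have h3 : (⟨bp s1 (s1 i), bp_bp s1 (s1 i)⟩ : {x // bp s1 x = x})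
          = ⟨bp s1 i, bp_bp s1 i⟩ := Subtype.ext hbp1
      rw [hT]
      simp only []
      rw [hidxS, h3, pow_succ']
      rfl
  set t : Equiv.Perm (Fin n) := ⟨T, U, hUT, hTU⟩ with ht
  have hperm : t * s1 * t⁻¹ = s2 := by
    apply Equiv.ext
    intro j
    show T (s1 (U j)) = s2 j
    rw [hconj (U j), hTU j]
  set gmid : Fin n → G := fun j => g1 (t⁻¹ j) with hgmid
  have hmid' : (⟨fun _ => (1 : G), t⟩ : WreathProduct G n) * ⟨g1, s1⟩
      * (⟨fun _ => (1 : G), t⟩ : WreathProduct G n)⁻¹ = ⟨gmid, s2⟩ := by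
    rw [conj_mk, hperm]
    congr 1
    funext j
    rw [hgmid]
    simp
  have hcycmid : ∀ j : Fin n, cycleProd gmid s2 j = cycleProd g1 s1 (U j) := by
    intro j
    have hcc := cycleProd_conj g1 (fun _ => (1 : G)) s1 t (U j)
    simp only [one_mul, inv_one, mul_one] at hcc
    rw [hperm] at hcc
    rw [show (t (U j) : Fin n) = j from hTU j] at hcc
    rw [hgmid]
    exact hcc
  have hcyc : ∀ j : Fin n, IsConj (cycleProd gmid s2 j) (cycleProd g2 s2 j) := by
    intro j
    rw [hcycmid j]
    have c1 : IsConj (cycleProd g1 s1 (U j)) (cycleProd g1 s1 (bp s1 (U j))) :=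
      isConj_bp g1 s1 (U j)
    have c2 := hcls ⟨bp s1 (U j), bp_bp s1 (U j)⟩
    have c3 : ((e ⟨bp s1 (U j), bp_bp s1 (U j)⟩).1 : Fin n) = bp s2 j := by
      have hb := hTbp (U j)
      rw [show (T (U j) : Fin n) = j from hTU j] at hb
      exact hb.symm
    rw [c3] at c2
    have c4 : IsConj (cycleProd g2 s2 j) (cycleProd g2 s2 (bp s2 j)) := isConj_bp g2 s2 j
    exact (c1.trans c2.symm).trans c4.symm
  obtain ⟨h, hh⟩ := exists_gauge gmid g2 s2 hcyc
  have hfinal : (⟨h, 1⟩ : WreathProduct G n) * ⟨gmid, s2⟩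
      * (⟨h, 1⟩ : WreathProduct G n)⁻¹ = ⟨g2, s2⟩ := by
    rw [conj_mk]
    congr 1
    funext j
    simp only [inv_one, Equiv.Perm.coe_one, id_eq, one_mul, mul_one]
    exact (hh j).symm
  exact (isConj_iff.mpr ⟨_, hmid'⟩).trans (isConj_iff.mpr ⟨_, hfinal⟩)

end WreathConjAux

open WreathConjAux in
/-- **Conjugacy classes in wreath products.** Two elements of `Gₙ = G ≀ Sₙ` are conjugate if
and only if they have the same type, i.e. iff for every `r ≥ 1` and every conjugacy class
`[c]` of elements of `G` the numbers `m_r(c)` of `r`-cycles of the underlying permutations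
whose cycle products lie in `[c]` coincide. -/
theorem wreath_isConj_iff_same_type
    (G : Type*) [Group G] (n : ℕ) (hn : 1 ≤ n) (a b : WreathProduct G n) :
    IsConj a b ↔ ∀ (r : ℕ), 1 ≤ r → ∀ c : G,
      mCount a.left a.right r c = mCount b.left b.right r c := by
  classical
  obtain ⟨g1, s1⟩ := a
  obtain ⟨g2, s2⟩ := b
  show IsConj _ _ ↔ ∀ (r : ℕ), 1 ≤ r → ∀ c : G, mCount g1 s1 r c = mCount g2 s2 r c
  constructor
  · intro hab
    obtain ⟨x, hx⟩ := isConj_iff.mp hab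
    obtain ⟨h, t⟩ := x
    rw [conj_mk] at hx
    intro r hr c
    rw [show mCount g2 s2 r c
        = mCount (fun j => h j * g1 (t⁻¹ j) * (h (t (s1⁻¹ (t⁻¹ j))))⁻¹) (t * s1 * t⁻¹) r c from by
      obtain ⟨rfl, rfl⟩ : (fun j => h j * g1 (t⁻¹ j) * (h (t (s1⁻¹ (t⁻¹ j))))⁻¹) = g2
          ∧ t * s1 * t⁻¹ = s2 := by
        constructor
        · exact congrArg SemidirectProduct.left hx
        · exact congrArg SemidirectProduct.right hx
      rfl]
    exact (mCount_conj g1 h s1 t r c).symm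
  · intro H
    -- step 1: equality of base-point counts
    have hbase : ∀ r : ℕ, 0 < r → ∀ c : G,
        Nat.card {x : Fin n // bp s1 x = x ∧ Function.minimalPeriod ⇑s1 x = r
          ∧ IsConj (cycleProd g1 s1 x) c}
        = Nat.card {x : Fin n // bp s2 x = x ∧ Function.minimalPeriod ⇑s2 x = r
          ∧ IsConj (cycleProd g2 s2 x) c} := by
      intro r hr c
      have hH := H r hr c
      unfold mCount at hH
      rw [card_fiber g1 s1 r c, card_fiber g2 s2 r c,
        Nat.mul_div_cancel_left _ hr, Nat.mul_div_cancel_left _ hr] at hH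
      exact hH
    -- step 2: fiberwise card equality for the invariant maps
    set Ψ1 : {x : Fin n // bp s1 x = x} → ℕ × Set G :=
      fun x => (Function.minimalPeriod ⇑s1 x.1, {d | IsConj (cycleProd g1 s1 x.1) d}) with hΨ1
    set Ψ2 : {x : Fin n // bp s2 x = x} → ℕ × Set G :=
      fun x => (Function.minimalPeriod ⇑s2 x.1, {d | IsConj (cycleProd g2 s2 x.1) d}) with hΨ2
    have hfib : ∀ v : ℕ × Set G,
        Nat.card {x // Ψ1 x = v} = Nat.card {y // Ψ2 y = v} := by
      rintro ⟨r, C⟩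
      by_cases h1 : Nonempty {x // Ψ1 x = (r, C)}
      · obtain ⟨⟨⟨x, hxbp⟩, hx⟩⟩ := h1
        rw [hΨ1] at hx
        simp only [Prod.mk.injEq] at hx
        obtain ⟨hxr, hxC⟩ := hx
        subst hxr
        subst hxC
        rw [hΨ1, hΨ2, card_fiber' g1 s1 _ _, card_fiber' g2 s2 _ _]
        exact hbase _ (perm_minPeriod_pos s1 x) _
      · by_cases h2 : Nonempty {y // Ψ2 y = (r, C)}
        · obtain ⟨⟨⟨y, hybp⟩, hy⟩⟩ := h2
          rw [hΨ2] at hy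
          simp only [Prod.mk.injEq] at hy
          obtain ⟨hyr, hyC⟩ := hy
          subst hyr
          subst hyC
          rw [hΨ1, hΨ2, card_fiber' g1 s1 _ _, card_fiber' g2 s2 _ _]
          exact hbase _ (perm_minPeriod_pos s2 y) _
        · haveI := not_nonempty_iff.mp h1
          haveI := not_nonempty_iff.mp h2
          rw [Nat.card_of_isEmpty, Nat.card_of_isEmpty]
    -- step 3: matching
    obtain ⟨e, he⟩ := matching Ψ1 Ψ2 hfib
    have hper : ∀ x, Function.minimalPeriod ⇑s2 (e x).1 = Function.minimalPeriod ⇑s1 x.1 := by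
      intro x
      have := congrArg Prod.fst (he x)
      rw [hΨ1, hΨ2] at this
      exact this
    have hcls : ∀ x, IsConj (cycleProd g2 s2 (e x).1) (cycleProd g1 s1 x.1) := by
      intro x
      have := congrArg Prod.snd (he x)
      rw [hΨ1, hΨ2] at this
      exact classSet_eq_iff.mp this
    exact backward g1 g2 s1 s2 e hper hcls
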